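/- Let 𝔽_q be a finite field with q elements, k ≥ 1, n = q^k − 1, and let X = 𝒞 ⊆ 𝔽_q^n be a dual Hamming code, i.e., the cyclic code generated by g(x) = (x^n−1)/g⊥(x) for a primitive monic irreducible g⊥ of degree k. Let w ∈ 𝔽_q^n be the word with g(x) = Σ_{j=1}^n w_j x^{j−1}, and fix any linear order on 𝔽_q (used to define maj and cdes). Then (X, X^maj(t), C) exhibits the cyclic sieving phenomenon if and only if gcd(n, cdes(w)) = 1. -/

import Mathlib

/-- The (leftward) cyclic shift on words of length `n`:
`c(w₁,…,wₙ) = (w₂,…,wₙ,w₁)`. -/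
def cshift {A : Type*} {n : ℕ} (w : Fin n → A) : Fin n → A :=
  fun i => w ⟨((i : ℕ) + 1) % n, Nat.mod_lt _ i.pos⟩

/-- The major index of a word: `maj w = Σ_{1 ≤ i ≤ n-1, w_i > w_{i+1}} i`
(here positions are 0-indexed, so position `i : Fin n` is the `(i+1)`-st letter). -/
def majIdx {A : Type*} [LinearOrder A] {n : ℕ} (w : Fin n → A) : ℕ :=
  ∑ i : Fin n,
    if h : (i : ℕ) + 1 < n then (if w ⟨(i : ℕ) + 1, h⟩ < w i then (i : ℕ) + 1 else 0) else 0

/-- The number of cyclic descents of a word, `cdes w = #{i : w_i > w_{i+1}}`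
with indices read cyclically (`w_{n+1} := w_1`). -/
def cdes {A : Type*} [LinearOrder A] {n : ℕ} (w : Fin n → A) : ℕ :=
  (Finset.univ.filter fun i : Fin n =>
    w ⟨((i : ℕ) + 1) % n, Nat.mod_lt _ i.pos⟩ < w i).card

/-- The inversion number of a word: `inv w = #{(i,j) : i < j, w_i > w_j}`. -/
def invNum {A : Type*} [LinearOrder A] {n : ℕ} (w : Fin n → A) : ℕ :=
  (Finset.univ.filter fun p : Fin n × Fin n => p.1 < p.2 ∧ w p.2 < w p.1).card

/-- The Hamming weight of a binary word: the number of ones. -/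
def wt {n : ℕ} (w : Fin n → Bool) : ℕ :=
  (Finset.univ.filter fun i => w i = true).card

/-- The triple `(X, Σ_{x ∈ X} t^{stat x}, C)` exhibits the cyclic sieving phenomenon,
where `C` is the cyclic group of order `n` generated by the cyclic shift `c` acting on `X`:
for every `d`, the number of fixed points of `c^d` on `X` equals the evaluation of
`Σ_{x ∈ X} t^{stat x}` at `t = ζ^d`, with `ζ = exp(2πi/n)`. -/
def exhibitsCSP {A : Type*} [DecidableEq A] {n : ℕ} (X : Finset (Fin n → A))
    (stat : (Fin n → A) → ℕ) : Prop :=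
  ∀ d : ℕ,
    ((X.filter fun v => cshift^[d] v = v).card : ℂ) =
      ∑ v ∈ X, Complex.exp (2 * (Real.pi : ℂ) * Complex.I / n) ^ (d * stat v)

/-- The polynomial `w₁ + w₂ x + ⋯ + wₙ x^{n-1}` associated to a word `w ∈ F^n` under
the standard identification of `F^n` with `F[x]/(xⁿ-1)`.  A word `w` belongs to the
cyclic code generated by a monic divisor `g` of `xⁿ - 1` exactly when `g ∣ wordPoly w`. -/
noncomputable def wordPoly {F : Type*} [CommRing F] {n : ℕ} (w : Fin n → F) :
    Polynomial F :=
  ∑ i : Fin n, Polynomial.C (w i) * Polynomial.X ^ (i : ℕ)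

section AuxCyc
variable {A : Type*} {n : ℕ}

theorem cshift_iterate (j : ℕ) (v : Fin n → A) (i : Fin n) :
    cshift^[j] v i = v ⟨((i : ℕ) + j) % n, Nat.mod_lt _ i.pos⟩ := by
  induction j generalizing v with
  | zero => simp [Nat.mod_eq_of_lt i.isLt]
  | succ j ih =>
      rw [Function.iterate_succ_apply, ih (cshift v)]
      show v _ = _
      congr 1
      apply Fin.ext
      show ((↑i + j) % n + 1) % n = (↑i + (j+1)) % n
      rw [Nat.mod_add_mod]; ring_nf

theorem cshift_iterate_n (v : Fin n → A) : cshift^[n] v = v := by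
  funext i
  rw [cshift_iterate]
  congr 1
  apply Fin.ext
  show ((i : ℕ) + n) % n = i
  rw [Nat.add_mod_right, Nat.mod_eq_of_lt i.isLt]

theorem cshift_injective (hn : 0 < n) :
    Function.Injective (cshift : (Fin n → A) → (Fin n → A)) := by
  have h : Function.LeftInverse (cshift^[n-1]) (cshift : (Fin n → A) → _) := by
    intro v
    rw [← Function.iterate_succ_apply, Nat.succ_eq_add_one, show n - 1 + 1 = n by omega,
      cshift_iterate_n]
  exact h.injective

end AuxCyc

section MajCdes
variable {A : Type*} [LinearOrder A] {m : ℕ}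

theorem cshift_apply (v : Fin (m+1) → A) (i : Fin (m+1)) :
    cshift v i = v (finRotate (m+1) i) := by
  unfold cshift
  congr 1
  rw [finRotate_succ_apply]
  apply Fin.ext
  rw [Fin.add_def]
  simp [Nat.mod_add_mod]

/-- Indicator of a cyclic descent at position `i`. -/
def Dind (v : Fin (m+1) → A) (i : Fin (m+1)) : ℕ :=
  if v (finRotate (m+1) i) < v i then 1 else 0

theorem cdes_eq_sum (v : Fin (m+1) → A) : cdes v = ∑ i, Dind v i := by
  rw [cdes, Finset.card_filter]
  apply Finset.sum_congr rfl
  intro i _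
  rw [Dind]
  congr 2
  congr 1
  apply Fin.ext
  rw [finRotate_succ_apply, Fin.add_def]
  simp [Nat.mod_add_mod]

theorem maj_eq_sum (v : Fin (m+1) → A) :
    majIdx v + (m+1) * Dind v (Fin.last m) = ∑ i, Dind v i * ((i : ℕ) + 1) := by
  have : ∀ i : Fin (m+1), Dind v i * ((i:ℕ)+1) =
      (if h : (i:ℕ) + 1 < m+1 then (if v ⟨(i:ℕ)+1, h⟩ < v i then (i:ℕ)+1 else 0) else 0)
      + (if i = Fin.last m then (m+1) * Dind v i else 0) := by
    intro i
    by_cases hi : (i:ℕ) + 1 < m + 1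
    · have hne : i ≠ Fin.last m := by
        intro h; rw [h] at hi; simp [Fin.last] at hi
      have he : (⟨(i:ℕ)+1, hi⟩ : Fin (m+1)) = finRotate (m+1) i := by
        apply Fin.ext
        rw [finRotate_succ_apply, Fin.add_def]
        simp [Nat.mod_add_mod, Nat.mod_eq_of_lt hi]
      rw [dif_pos hi, if_neg hne, he, add_zero, Dind]
      by_cases hlt : v (finRotate (m+1) i) < v i <;> simp [hlt]
    · have hlast : i = Fin.last m := by
        apply Fin.ext; have := i.isLt; simp [Fin.last]; omega
      have hv : (i:ℕ) + 1 = m + 1 := by have := i.isLt; omega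
      rw [dif_neg hi, if_pos hlast, hv, zero_add, mul_comm]
  rw [Finset.sum_congr rfl (fun i _ => this i), Finset.sum_add_distrib,
    Finset.sum_ite_eq' Finset.univ (Fin.last m) (fun i => (m+1) * Dind v i),
    if_pos (Finset.mem_univ _), majIdx]

theorem dind_cshift (v : Fin (m+1) → A) (i : Fin (m+1)) :
    Dind (cshift v) i = Dind v (finRotate (m+1) i) := by
  rw [Dind, Dind, cshift_apply, cshift_apply]

theorem cdes_cshift (v : Fin (m+1) → A) : cdes (cshift v) = cdes v := by
  rw [cdes_eq_sum, cdes_eq_sum,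
    Finset.sum_congr rfl (fun i (_ : i ∈ Finset.univ) => dind_cshift v i)]
  exact Equiv.sum_comp (finRotate (m+1)) (Dind v)

theorem sum_reindex (v : Fin (m+1) → A) :
    ∑ i : Fin (m+1), Dind v (finRotate (m+1) i) * ((i:ℕ)+1) =
      ∑ j : Fin (m+1), Dind v j * (j:ℕ) + (m+1) * Dind v 0 := by
  have h1 : ∀ i : Fin (m+1), Dind v (finRotate (m+1) i) * ((i:ℕ)+1) =
      (fun j => Dind v j * (j:ℕ) + (if j = 0 then (m+1) * Dind v j else 0)) (finRotate (m+1) i) := by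
    intro i
    simp only [finRotate_succ_apply]
    by_cases hi : (i:ℕ) + 1 < m + 1
    · have hval : ((i + 1 : Fin (m+1)) : ℕ) = (i:ℕ) + 1 := by
        rw [Fin.add_def]; simp [Nat.mod_add_mod, Nat.mod_eq_of_lt hi]
      have hne : i + 1 ≠ (0 : Fin (m+1)) := by
        intro h
        have := congrArg Fin.val h
        rw [hval] at this; simp at this
      rw [if_neg hne, hval, add_zero]
    · have hv : (i:ℕ) = m := by have := i.isLt; omega
      have hz : i + 1 = (0 : Fin (m+1)) := by
        apply Fin.ext
        rw [Fin.add_def]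
        simp [hv, Nat.mod_add_mod]
      rw [hz, if_pos rfl]
      simp [hv, mul_comm]
  rw [Fintype.sum_equiv (finRotate (m+1)) _
      (fun j => Dind v j * (j:ℕ) + if j = 0 then (m+1) * Dind v j else 0) h1,
    Finset.sum_add_distrib, Finset.sum_ite_eq' Finset.univ (0 : Fin (m+1))
      (fun j => (m+1) * Dind v j), if_pos (Finset.mem_univ _)]

theorem maj_cshift_add_cdes (v : Fin (m+1) → A) :
    majIdx (cshift v) + cdes v = majIdx v + (m+1) * Dind v (Fin.last m) := by
  have h2 : majIdx (cshift v) + (m+1) * Dind v 0 =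
      ∑ i : Fin (m+1), Dind v (finRotate (m+1) i) * ((i:ℕ)+1) := by
    calc majIdx (cshift v) + (m+1) * Dind v 0
        = majIdx (cshift v) + (m+1) * Dind (cshift v) (Fin.last m) := by
          rw [dind_cshift v, show finRotate (m+1) (Fin.last m) = 0 by simp [finRotate_succ_apply]]
      _ = ∑ i, Dind (cshift v) i * ((i:ℕ)+1) := maj_eq_sum _
      _ = ∑ i : Fin (m+1), Dind v (finRotate (m+1) i) * ((i:ℕ)+1) :=
          Finset.sum_congr rfl (fun i _ => by rw [dind_cshift])
  have h3 := sum_reindex v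
  have h5 : ∑ i : Fin (m+1), Dind v i * ((i:ℕ)+1)
      = ∑ j : Fin (m+1), Dind v j * (j:ℕ) + cdes v := by
    rw [cdes_eq_sum, ← Finset.sum_add_distrib]
    exact Finset.sum_congr rfl (fun i _ => by ring)
  have h6 := maj_eq_sum v
  omega

theorem zeta_pow_maj {n : ℕ} (ξ : ℂ) (hξ : ξ^n = 1) (j : ℕ) (v : Fin n → A) :
    ξ ^ (majIdx (cshift^[j] v)) * (ξ ^ (cdes v))^j = ξ ^ (majIdx v) := by
  rcases n with _ | M
  · have h1 : ∀ u : Fin 0 → A, majIdx u = 0 := fun u => rfl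
    have h2 : cdes v = 0 := rfl
    rw [h1, h1, h2, pow_zero, one_pow, mul_one]
  · induction j generalizing v with
    | zero => simp
    | succ j ih =>
      rw [Function.iterate_succ_apply]
      have ih' := ih (cshift v)
      rw [cdes_cshift] at ih'
      have hident := maj_cshift_add_cdes v
      calc ξ ^ majIdx (cshift^[j] (cshift v)) * (ξ ^ cdes v) ^ (j+1)
          = (ξ ^ majIdx (cshift^[j] (cshift v)) * (ξ ^ cdes v) ^ j) * ξ ^ cdes v := by ring
        _ = ξ ^ majIdx (cshift v) * ξ ^ cdes v := by rw [ih']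
        _ = ξ ^ (majIdx (cshift v) + cdes v) := by rw [pow_add]
        _ = ξ ^ (majIdx v + (M+1) * Dind v (Fin.last M)) := by rw [hident]
        _ = ξ ^ majIdx v * (ξ ^ (M+1)) ^ (Dind v (Fin.last M)) := by rw [pow_add, pow_mul]
        _ = ξ ^ majIdx v := by rw [hξ, one_pow, mul_one]

end MajCdes

section PolyAux
open Polynomial
variable {F : Type*} [CommRing F] {n : ℕ}

theorem wordPoly_coeff (v : Fin n → F) (j : ℕ) :
    (wordPoly v).coeff j = if h : j < n then v ⟨j, h⟩ else 0 := by
  rw [wordPoly, finset_sum_coeff]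
  simp only [coeff_C_mul, coeff_X_pow, mul_ite, mul_one, mul_zero]
  by_cases h : j < n
  · rw [dif_pos h, Finset.sum_eq_single (⟨j, h⟩ : Fin n)]
    · simp
    · intro b _ hb
      rw [if_neg]
      intro hbj
      exact hb (Fin.ext hbj.symm)
    · simp
  · rw [dif_neg h]
    apply Finset.sum_eq_zero
    intro b _
    rw [if_neg]
    intro hbj
    exact h (hbj ▸ b.isLt)

theorem wordPoly_degree_lt (v : Fin n → F) : (wordPoly v).degree < n := by
  rw [degree_lt_iff_coeff_zero]
  intro mm hm
  rw [wordPoly_coeff, dif_neg (by exact_mod_cast not_lt.mpr hm)]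

theorem wordPoly_inj {v u : Fin n → F} (h : wordPoly v = wordPoly u) : v = u := by
  funext i
  have := congrArg (fun p => Polynomial.coeff p (i:ℕ)) h
  simpa [wordPoly_coeff, i.isLt] using this

theorem wordPoly_cshift (hn : 0 < n) (v : Fin n → F) :
    X * wordPoly (cshift v) = wordPoly v + C (v ⟨0, hn⟩) * (X ^ n - 1) := by
  apply Polynomial.ext
  intro j
  cases j with
  | zero =>
    rw [coeff_X_mul_zero]
    simp only [coeff_add, coeff_C_mul, wordPoly_coeff, coeff_sub, coeff_X_pow, coeff_one]
    rw [dif_pos hn, if_neg (by omega : ¬ (0:ℕ) = n)]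
    simp
  | succ jj =>
    rw [coeff_X_mul]
    simp only [coeff_add, coeff_C_mul, wordPoly_coeff, coeff_sub, coeff_X_pow, coeff_one]
    by_cases h1 : jj < n
    · rw [dif_pos h1]
      simp only [cshift]
      by_cases h2 : jj + 1 < n
      · rw [dif_pos h2]
        rw [if_neg (by omega : ¬ jj + 1 = n), if_neg (by omega : ¬ jj + 1 = 0)]
        simp only [Nat.mod_eq_of_lt h2]
        simp
      · have hjn : jj + 1 = n := by omega
        rw [dif_neg h2, if_pos hjn, if_neg (by omega : ¬ jj + 1 = 0)]
        simp only [hjn, Nat.mod_self]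
        simp
    · rw [dif_neg h1, dif_neg (by omega : ¬ jj + 1 < n),
        if_neg (by omega : ¬ jj + 1 = n), if_neg (by omega : ¬ jj + 1 = 0)]
      ring

theorem wordPoly_cshift_dvd (hn : 0 < n) (v : Fin n → F) :
    (X ^ n - 1 : F[X]) ∣ wordPoly (cshift v) - X ^ (n-1) * wordPoly v := by
  obtain ⟨M, rfl⟩ : ∃ M, n = M + 1 := ⟨n-1, by omega⟩
  simp only [Nat.add_sub_cancel]
  refine ⟨C (v ⟨0, hn⟩) * X ^ M - wordPoly (cshift v), ?_⟩
  have h := wordPoly_cshift hn v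
  linear_combination (X:F[X])^M * h

theorem wordPoly_iterate_dvd (hn : 0 < n) (v : Fin n → F) (j : ℕ) :
    (X ^ n - 1 : F[X]) ∣ wordPoly (cshift^[j] v) - X ^ (j*(n-1)) * wordPoly v := by
  induction j generalizing v with
  | zero => simp
  | succ j ih =>
    have h1 := ih (cshift v)
    have h3 : (X^n - 1 : F[X]) ∣
        X^(j*(n-1)) * (wordPoly (cshift v) - X^(n-1) * wordPoly v) :=
      Dvd.dvd.mul_left (wordPoly_cshift_dvd hn v) _
    have h4 := dvd_add h1 h3
    rw [Function.iterate_succ_apply]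
    convert h4 using 1
    rw [Nat.succ_mul, pow_add]
    ring

theorem X_pow_mod_dvd (a : ℕ) : (X^n - 1 : F[X]) ∣ X^a - X^(a % n) := by
  have h : (X^a : F[X]) = X^(a%n) * (X^n)^(a/n) := by
    rw [← pow_mul, ← pow_add, Nat.mod_add_div a n]
  have hd := sub_dvd_pow_sub_pow (X^n : F[X]) 1 (a/n)
  rw [one_pow] at hd
  have heq : (X^a - X^(a%n) : F[X]) = X^(a%n) * ((X^n)^(a/n) - 1) := by
    rw [mul_sub, mul_one, ← h]
  rw [heq]
  exact Dvd.dvd.mul_left hd _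

end PolyAux

/-- for X = C a dual Hamming code of dimension k and length n = q^k - 1
(the cyclic code generated by g = (x^n-1)/gperp with gperp primitive monic irreducible
of degree k), with w the word corresponding to g and any linear order fixed on F_q,
the triple (X, X^maj(t), C) exhibits the CSP if and only if gcd(n, cdes w) = 1. -/
theorem stmt15 {F : Type*} [Field F] [Fintype F] [LinearOrder F] (k : ℕ) (hk : 1 ≤ k)
    (n : ℕ) (hn : n = Fintype.card F ^ k - 1)
    (gperp : Polynomial F) (hmonic : gperp.Monic) (hirr : Irreducible gperp)
    (hdeg : gperp.natDegree = k)
    (hprim : orderOf (AdjoinRoot.root gperp) = n)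
    (g : Polynomial F) (hg : g * gperp = Polynomial.X ^ n - 1)
    (X : Finset (Fin n → F)) (hX : ∀ v : Fin n → F, v ∈ X ↔ g ∣ wordPoly v)
    (w : Fin n → F) (hw : ∀ i : Fin n, w i = g.coeff (i : ℕ)) :
    exhibitsCSP X majIdx ↔ Nat.gcd n (cdes w) = 1 := by
  classical
  haveI := Fact.mk hirr
  set θ : AdjoinRoot gperp := AdjoinRoot.root gperp with hθdef
  have hq2 : 2 ≤ Fintype.card F := Fintype.one_lt_card
  have hn1 : 0 < n := by
    have : 2 ≤ Fintype.card F ^ k := le_trans hq2 (Nat.le_self_pow (by omega) _)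
    omega
  have hkn : k ≤ n := by
    have h1 : k < 2 ^ k := Nat.lt_two_pow_self
    have h2 : 2 ^ k ≤ Fintype.card F ^ k := Nat.pow_le_pow_left hq2 k
    omega
  -- basic facts about X^n - 1 and g
  have hxn1 : (Polynomial.X ^ n - 1 : Polynomial F) ≠ 0 := by
    have := Polynomial.X_pow_sub_C_ne_zero hn1 (1 : F)
    simpa using this
  have hxn1deg : (Polynomial.X ^ n - 1 : Polynomial F).degree = (n : WithBot ℕ) := by
    have := Polynomial.degree_X_pow_sub_C hn1 (1 : F)
    simpa using this
  have hxn1ndeg : (Polynomial.X ^ n - 1 : Polynomial F).natDegree = n := by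
    have := Polynomial.natDegree_X_pow_sub_C (n := n) (r := (1:F))
    simpa using this
  have hgperp0 : gperp ≠ 0 := hmonic.ne_zero
  have hg0 : g ≠ 0 := by
    intro h
    rw [h, zero_mul] at hg
    exact hxn1 hg.symm
  have hgdeg : g.natDegree = n - k := by
    have := Polynomial.natDegree_mul hg0 hgperp0
    rw [hg, hxn1ndeg, hdeg] at this
    omega
  have hgmonic : g.Monic := by
    have hmul : (g * gperp).Monic := by
      rw [hg]
      have := Polynomial.monic_X_pow_sub_C (1 : F) (by omega : n ≠ 0)
      simpa using this
    exact hmonic.of_mul_monic_right hmul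
  have hwp : wordPoly w = g := by
    apply Polynomial.ext
    intro j
    rw [wordPoly_coeff]
    by_cases h : j < n
    · rw [dif_pos h]
      exact (hw ⟨j, h⟩)
    · rw [dif_neg h]
      exact (Polynomial.coeff_eq_zero_of_natDegree_lt (by omega)).symm
  have hwne : w ≠ 0 := by
    intro h
    have h1 : w ⟨n - k, by omega⟩ = 1 := by
      rw [hw]
      have h2 : g.coeff (n - k) = g.leadingCoeff := by
        rw [Polynomial.leadingCoeff, hgdeg]
      rw [h2, hgmonic.leadingCoeff]
    rw [h] at h1
    exact one_ne_zero h1.symm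
  -- field facts
  have hθn : θ ^ n = 1 := by rw [← hprim]; exact pow_orderOf_eq_one θ
  haveI : Fintype (AdjoinRoot gperp) :=
    Module.fintypeOfFintype (AdjoinRoot.powerBasis hirr.ne_zero).basis
  have hcard : Nat.card (AdjoinRoot gperp) = Fintype.card F ^ k := by
    rw [Nat.card_eq_fintype_card, Module.card_eq_pow_finrank (K := F) (V := AdjoinRoot gperp),
      (AdjoinRoot.powerBasis hirr.ne_zero).finrank, AdjoinRoot.powerBasis_dim, hdeg]
  have hpow : ∀ a : AdjoinRoot gperp, a ≠ 0 → ∃ i : ℕ, i < n ∧ θ ^ i = a := by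
    have hu : IsUnit θ := by
      apply IsUnit.of_mul_eq_one (a := θ) (θ ^ (n - 1))
      rw [← pow_succ', show n - 1 + 1 = n by omega, hθn]
    have hou : orderOf hu.unit = n := by rw [← orderOf_units, hu.unit_spec, hprim]
    have hcardu : Nat.card (AdjoinRoot gperp)ˣ = n := by
      rw [Nat.card_eq_fintype_card, Fintype.card_units, ← Nat.card_eq_fintype_card, hcard, hn]
    have htop : Subgroup.zpowers hu.unit = ⊤ := by
      apply Subgroup.eq_top_of_card_eq
      rw [Nat.card_zpowers, hou, hcardu]
    intro a ha
    have hau : IsUnit a := ha.isUnit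
    have hmem : hau.unit ∈ Subgroup.zpowers hu.unit := htop ▸ Subgroup.mem_top _
    rw [← mem_powers_iff_mem_zpowers] at hmem
    obtain ⟨i, hi⟩ := hmem
    refine ⟨i % n, Nat.mod_lt _ hn1, ?_⟩
    have h2 : θ ^ i = a := by
      have := congrArg (Units.val) hi
      simpa [hu.unit_spec, hau.unit_spec] using this
    rw [← h2, ← hprim, pow_mod_orderOf]
  have hdvd_iff : ∀ m : ℕ, gperp ∣ (Polynomial.X ^ m - 1 : Polynomial F) ↔ θ ^ m = 1 := by
    intro m
    have hmk : AdjoinRoot.mk gperp (Polynomial.X ^ m - 1) = θ ^ m - 1 := by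
      rw [map_sub, map_pow, AdjoinRoot.mk_X, map_one]
    rw [← AdjoinRoot.mk_eq_zero, hmk, sub_eq_zero]
  -- the orbit of w is inside X
  have horb : ∀ j : ℕ, cshift^[j] w ∈ X := by
    intro j
    rw [hX]
    obtain ⟨c, hc⟩ := wordPoly_iterate_dvd hn1 w j
    rw [hwp] at hc
    exact ⟨Polynomial.X ^ (j*(n-1)) + gperp * c, by linear_combination hc - c * hg⟩
  -- freeness
  have hfree : ∀ d : ℕ, d < n → cshift^[d] w = w → d = 0 := by
    intro d hd hfix
    obtain ⟨c, hc⟩ := wordPoly_iterate_dvd hn1 w d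
    rw [hfix, hwp] at hc
    have hdvd : gperp ∣ (Polynomial.X ^ (d*(n-1)) - 1 : Polynomial F) := by
      have h2 : g * gperp ∣ g * (Polynomial.X ^ (d*(n-1)) - 1) := by
        rw [hg]
        exact ⟨-c, by linear_combination -hc⟩
      exact (mul_dvd_mul_iff_left hg0).mp h2
    have hθm : θ ^ (d*(n-1)) = 1 := (hdvd_iff _).mp hdvd
    have hdvdn : n ∣ d * (n-1) := by
      have h6 := orderOf_dvd_of_pow_eq_one hθm
      rwa [hprim] at h6
    have hcop : Nat.Coprime n (n-1) := by
      have h1 : Nat.gcd n (n-1) ∣ 1 := by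
        have := Nat.dvd_sub (Nat.gcd_dvd_left n (n-1)) (Nat.gcd_dvd_right n (n-1))
        rwa [show n - (n-1) = 1 by omega] at this
      exact Nat.dvd_one.mp h1
    exact Nat.eq_zero_of_dvd_of_lt (hcop.dvd_of_dvd_mul_right hdvdn) hd
  -- membership: nonzero codewords are shifts of w
  have hmem : ∀ v : Fin n → F, v ∈ X → v ≠ 0 → ∃ j : Fin n, v = cshift^[(j:ℕ)] w := by
    intro v hv hv0
    have hgv : g ∣ wordPoly v := (hX v).mp hv
    have hwpz : wordPoly (0 : Fin n → F) = 0 := by simp [wordPoly]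
    have hvne : wordPoly v ≠ 0 := fun h => hv0 (wordPoly_inj (h.trans hwpz.symm))
    obtain ⟨h, hh⟩ := hgv
    have hh0 : h ≠ 0 := by
      intro h0; rw [h0, mul_zero] at hh; exact hvne hh
    have hvdeg : (wordPoly v).natDegree < n := by
      exact (Polynomial.natDegree_lt_iff_degree_lt hvne).mpr (wordPoly_degree_lt v)
    have hhdeg : h.natDegree < k := by
      have := Polynomial.natDegree_mul hg0 hh0
      rw [← hh] at this
      omega
    have hnd : ¬ gperp ∣ h := by
      intro hd
      have := Polynomial.natDegree_le_of_dvd hd hh0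
      omega
    have hmk0 : AdjoinRoot.mk gperp h ≠ 0 := fun h0 => hnd (AdjoinRoot.mk_eq_zero.mp h0)
    obtain ⟨i, hi, hθi⟩ := hpow _ hmk0
    have hdvd2 : gperp ∣ h - Polynomial.X ^ i := by
      rw [← AdjoinRoot.mk_eq_zero, map_sub, map_pow, AdjoinRoot.mk_X, hθi, sub_self]
    have hdvd3 : (Polynomial.X ^ n - 1 : Polynomial F) ∣ wordPoly v - g * Polynomial.X ^ i := by
      obtain ⟨c, hc⟩ := hdvd2
      exact ⟨c, by rw [hh]; linear_combination g * hc + c * hg⟩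
    set j : ℕ := (n - i) % n with hjdef
    have hj : (j * (n-1)) % n = i := by
      have h1j : ((j : ℕ) : ZMod n) = - (i : ZMod n) := by
        rw [hjdef, ZMod.natCast_mod, Nat.cast_sub (le_of_lt hi), ZMod.natCast_self, zero_sub]
      have h2j : ((n - 1 : ℕ) : ZMod n) = - 1 := by
        rw [Nat.cast_sub (by omega : 1 ≤ n), ZMod.natCast_self, zero_sub, Nat.cast_one]
      have hmodeq : (((j * (n-1) : ℕ)) : ZMod n) = ((i : ℕ) : ZMod n) := by
        rw [Nat.cast_mul, h1j, h2j]
        ring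
      have hme := (ZMod.natCast_eq_natCast_iff _ _ _).mp hmodeq
      rw [Nat.ModEq] at hme
      rw [hme, Nat.mod_eq_of_lt hi]
    have hdvd4 : (Polynomial.X ^ n - 1 : Polynomial F) ∣
        Polynomial.X ^ (j*(n-1)) - Polynomial.X ^ i := by
      have := X_pow_mod_dvd (n := n) (F := F) (j*(n-1))
      rwa [hj] at this
    have hdvd5 := wordPoly_iterate_dvd hn1 w j
    rw [hwp] at hdvd5
    have hdvd6 : (Polynomial.X ^ n - 1 : Polynomial F) ∣ wordPoly v - wordPoly (cshift^[j] w) := by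
      obtain ⟨c1, hc1⟩ := hdvd3
      obtain ⟨c2, hc2⟩ := hdvd4
      obtain ⟨c3, hc3⟩ := hdvd5
      exact ⟨c1 - c3 - c2 * g, by linear_combination hc1 - hc3 - g * hc2⟩
    have hzero : wordPoly v - wordPoly (cshift^[j] w) = 0 := by
      apply Polynomial.eq_zero_of_dvd_of_degree_lt hdvd6
      rw [hxn1deg]
      apply lt_of_le_of_lt (Polynomial.degree_sub_le _ _)
      exact max_lt (wordPoly_degree_lt v) (wordPoly_degree_lt _)
    refine ⟨⟨j, Nat.mod_lt _ hn1⟩, wordPoly_inj (sub_eq_zero.mp hzero)⟩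
  -- explicit description of X
  have hwp0 : wordPoly (0 : Fin n → F) = 0 := by simp [wordPoly]
  set orb : Finset (Fin n → F) :=
    Finset.image (fun j : Fin n => cshift^[(j:ℕ)] w) Finset.univ with horbdef
  have hinj : Function.Injective (fun j : Fin n => cshift^[(j:ℕ)] w) := by
    have key : ∀ a b : Fin n, (a:ℕ) < (b:ℕ) → cshift^[(a:ℕ)] w = cshift^[(b:ℕ)] w → False := by
      intro a b hlt heq
      have h1 : cshift^[n - (b:ℕ)] (cshift^[(a:ℕ)] w)
          = cshift^[n - (b:ℕ)] (cshift^[(b:ℕ)] w) := by rw [heq]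
      rw [← Function.iterate_add_apply, ← Function.iterate_add_apply,
        show n - (b:ℕ) + (b:ℕ) = n from by omega, cshift_iterate_n] at h1
      have hblt := b.isLt
      have h3 := hfree (n - (b:ℕ) + (a:ℕ)) (by omega) h1
      omega
    intro a b hab
    by_contra hne
    rcases Nat.lt_or_ge (a:ℕ) (b:ℕ) with h | h
    · exact key a b h hab
    · rcases Nat.lt_or_ge (b:ℕ) (a:ℕ) with h2 | h2
      · exact key b a h2 hab.symm
      · exact hne (Fin.ext (le_antisymm h2 h))
  have h0no : (0 : Fin n → F) ∉ orb := by
    rw [horbdef]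
    intro h0
    obtain ⟨j, _, hj0⟩ := Finset.mem_image.mp h0
    apply hwne
    have h1 : cshift^[n - (j:ℕ)] (cshift^[(j:ℕ)] w)
        = cshift^[n - (j:ℕ)] (0 : Fin n → F) := by rw [hj0]
    have h2 : cshift^[n - (j:ℕ)] (0 : Fin n → F) = 0 := by
      funext i; rw [cshift_iterate]; rfl
    have hjlt := j.isLt
    rw [← Function.iterate_add_apply, show n - (j:ℕ) + (j:ℕ) = n from by omega,
      cshift_iterate_n, h2] at h1
    exact h1
  have hXeq : X = insert 0 orb := by
    ext v
    rw [Finset.mem_insert, horbdef]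
    constructor
    · intro hv
      by_cases hvz : v = 0
      · exact Or.inl hvz
      · obtain ⟨j, hj⟩ := hmem v hv hvz
        exact Or.inr (Finset.mem_image.mpr ⟨j, Finset.mem_univ _, hj.symm⟩)
    · intro hv
      rcases hv with h0 | himg
      · rw [h0, hX, hwp0]
        exact dvd_zero g
      · obtain ⟨j, _, hj⟩ := Finset.mem_image.mp himg
        rw [← hj]; exact horb _
  -- fixed point counts
  have hfix0 : ∀ d : ℕ, cshift^[d] (0 : Fin n → F) = 0 := by
    intro d; funext i; rw [cshift_iterate]; rfl
  have hcardorb : orb.card = n := by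
    rw [horbdef, Finset.card_image_of_injective _ hinj, Finset.card_univ, Fintype.card_fin]
  have hLHS : ∀ d : ℕ, ((X.filter fun v => cshift^[d] v = v).card : ℂ)
      = 1 + (if n ∣ d then (n:ℂ) else 0) := by
    intro d
    rw [hXeq, Finset.filter_insert, if_pos (hfix0 d)]
    by_cases hd : n ∣ d
    · rw [if_pos hd]
      have hall : Finset.filter (fun v => cshift^[d] v = v) orb = orb := by
        apply Finset.filter_true_of_mem
        intro v hv
        rw [horbdef] at hv
        obtain ⟨j, _, hj⟩ := Finset.mem_image.mp hv
        obtain ⟨t, rfl⟩ := hd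
        have hfixw : cshift^[n*t] w = w := by
          rw [Function.iterate_mul]
          exact Function.iterate_fixed (cshift_iterate_n w) t
        rw [← hj, ← Function.iterate_add_apply, Nat.add_comm,
          Function.iterate_add_apply, hfixw]
      rw [hall, Finset.card_insert_of_notMem h0no, hcardorb]
      push_cast
      ring
    · rw [if_neg hd]
      have hnone : Finset.filter (fun v => cshift^[d] v = v) orb = ∅ := by
        rw [Finset.filter_eq_empty_iff]
        intro v hv
        rw [horbdef] at hv
        obtain ⟨j, _, hj⟩ := Finset.mem_image.mp hv
        intro hfix
        rw [← hj, ← Function.iterate_add_apply, Nat.add_comm,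
          Function.iterate_add_apply] at hfix
        have h1 : cshift^[d] w = w := (cshift_injective hn1).iterate (j:ℕ) hfix
        rw [show d = d % n + n * (d / n) from (Nat.mod_add_div d n).symm, Function.iterate_add_apply,
          Function.iterate_mul, Function.iterate_fixed (cshift_iterate_n w)] at h1
        have h2 := hfree (d % n) (Nat.mod_lt _ hn1) h1
        exact hd (Nat.dvd_of_mod_eq_zero h2)
      rw [hnone, Finset.card_insert_of_notMem (Finset.notMem_empty _), Finset.card_empty]
      push_cast; ring
  -- the sum side
  set ζ : ℂ := Complex.exp (2 * (Real.pi:ℂ) * Complex.I / n) with hζdef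
  have hζ : IsPrimitiveRoot ζ n := Complex.isPrimitiveRoot_exp n (by omega)
  have hζn : ζ ^ n = 1 := hζ.pow_eq_one
  have hζne : ζ ≠ 0 := by rw [hζdef]; exact Complex.exp_ne_zero _
  have hmaj0 : majIdx (0 : Fin n → F) = 0 := by
    rw [majIdx]
    apply Finset.sum_eq_zero
    intro i _
    split <;> simp
  have hRHS : ∀ d : ℕ, (∑ v ∈ X, ζ ^ (d * majIdx v))
      = 1 + ζ ^ (d * majIdx w) * (if n ∣ d * cdes w then (n:ℂ) else 0) := by
    intro d
    rw [hXeq, Finset.sum_insert h0no, hmaj0, mul_zero, pow_zero, horbdef,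
      Finset.sum_image (fun a _ b _ hab => hinj hab)]
    congr 1
    set z : ℂ := ζ ^ (d * cdes w) with hzdef
    have hzn : z ^ n = 1 := by
      rw [hzdef, ← pow_mul, mul_comm (d * cdes w) n, pow_mul, hζn, one_pow]
    set y : ℂ := z ^ (n-1) with hydef
    have hzy : z * y = 1 := by
      rw [hydef, ← pow_succ', show n - 1 + 1 = n from by omega, hzn]
    have hterm : ∀ j : ℕ, ζ ^ (d * majIdx (cshift^[j] w)) = ζ ^ (d * majIdx w) * y ^ j := by
      intro j
      have h1 := zeta_pow_maj (ζ^d) (by rw [← pow_mul, mul_comm, pow_mul, hζn, one_pow]) j w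
      simp only [← pow_mul] at h1
      calc ζ ^ (d * majIdx (cshift^[j] w))
          = ζ ^ (d * majIdx (cshift^[j] w)) * (z * y) ^ j := by rw [hzy, one_pow, mul_one]
        _ = (ζ ^ (d * majIdx (cshift^[j] w)) * z ^ j) * y ^ j := by rw [mul_pow]; ring
        _ = (ζ ^ (d * majIdx (cshift^[j] w)) * ζ ^ (d * cdes w * j)) * y ^ j := by
            rw [hzdef, ← pow_mul]
        _ = ζ ^ (d * majIdx w) * y ^ j := by rw [h1]
    rw [Finset.sum_congr rfl (fun (j : Fin n) _ => hterm (j:ℕ)), ← Finset.mul_sum]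
    congr 1
    rw [Fin.sum_univ_eq_sum_range (fun j => y ^ j)]
    by_cases hz1 : z = 1
    · have hdv : n ∣ d * cdes w := (hζ.pow_eq_one_iff_dvd _).mp (by rw [← hzdef]; exact hz1)
      rw [if_pos hdv]
      have hy1 : y = 1 := by rw [hydef, hz1, one_pow]
      rw [hy1]
      simp
    · have hdv : ¬ n ∣ d * cdes w := fun hdd => hz1 (by
        rw [hzdef]; exact (hζ.pow_eq_one_iff_dvd _).mpr hdd)
      rw [if_neg hdv]
      have hy1 : y ≠ 1 := fun h => hz1 (by rw [← hzy, h, mul_one])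
      rw [geom_sum_eq hy1]
      have hyn : y ^ n = 1 := by
        rw [hydef, ← pow_mul, mul_comm, pow_mul, hzn, one_pow]
      rw [hyn, sub_self, zero_div]
  -- put everything together
  have hiff : exhibitsCSP X majIdx ↔ ∀ d : ℕ,
      (1 + (if n ∣ d then (n:ℂ) else 0))
        = 1 + ζ ^ (d * majIdx w) * (if n ∣ d * cdes w then (n:ℂ) else 0) := by
    unfold exhibitsCSP
    apply forall_congr'
    intro d
    rw [hLHS d, hRHS d]
  rw [hiff]
  constructor
  · intro H
    by_contra hgcd
    have hepos : 0 < Nat.gcd n (cdes w) := Nat.gcd_pos_of_pos_left _ hn1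
    set e := Nat.gcd n (cdes w) with hedef
    have he2 : 2 ≤ e := by omega
    have hedn : e ∣ n := Nat.gcd_dvd_left _ _
    have hedc : e ∣ cdes w := Nat.gcd_dvd_right _ _
    set d := n / e with hddef
    have hdpos : 0 < d := Nat.div_pos (Nat.le_of_dvd hn1 hedn) (by omega)
    have hdlt : d < n := Nat.div_lt_self hn1 (by omega)
    have hndd : ¬ n ∣ d := fun hdd => absurd (Nat.le_of_dvd hdpos hdd) (by omega)
    have hde : d * e = n := Nat.div_mul_cancel hedn
    have hndc : n ∣ d * cdes w := by
      obtain ⟨c, hc⟩ := hedc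
      exact ⟨c, by rw [hc, ← mul_assoc, hde]⟩
    have hthis := H d
    rw [if_neg hndd, if_pos hndc, add_zero] at hthis
    have hz0 : ζ ^ (d * majIdx w) * (n:ℂ) ≠ 0 :=
      mul_ne_zero (pow_ne_zero _ hζne) (Nat.cast_ne_zero.mpr (by omega))
    exact hz0 (by linear_combination -hthis)
  · intro hcop d
    have hc : Nat.Coprime n (cdes w) := hcop
    by_cases hd : n ∣ d
    · rw [if_pos hd, if_pos (Dvd.dvd.mul_right hd _)]
      obtain ⟨t, rfl⟩ := hd
      rw [show n * t * majIdx w = n * (t * majIdx w) from by ring, pow_mul, hζn, one_pow, one_mul]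
    · rw [if_neg hd, if_neg (fun h => hd (hc.dvd_of_dvd_mul_right h)), mul_zero]
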